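/- Let G be an n-vertex graph such that for every two disjoint subsets S, T of V(G) of size k there is an edge between them, and let M be a collection of disjoint pairs of vertices of G (possibly with repeated vertices, i.e. pairs {x,x}). Then the graph G ∪ M (obtained by adding all edges xy for distinct pairs {x,y} ∈ M) contains an M-alternating path which uses all but at most 2k − 1 pairs of M. -/

import Mathlib

open Finset

open Classical in
def IsNDLGraph (n d : ℕ) (lam : ℝ) (G : SimpleGraph (Fin n)) : Prop :=
  G.IsRegularOfDegree d ∧ 0 ≤ lam ∧
    ∀ μ : ℝ, Module.End.HasEigenvalue (Matrix.toLin' (G.adjMatrix ℝ)) μ → μ = (d : ℝ) ∨ |μ| ≤ lam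

section Aux

variable {n k : ℕ} {G : SimpleGraph (Fin n)} {M : Finset (Fin n × Fin n)}

lemma aux_no_big
    (hG : ∀ S T : Finset (Fin n), Disjoint S T → S.card = k → T.card = k →
      ∃ s ∈ S, ∃ t ∈ T, G.Adj s t)
    (share : ∀ p ∈ M, ∀ q ∈ M, ∀ v : Fin n,
      (v = p.1 ∨ v = p.2) → (v = q.1 ∨ v = q.2) → p = q)
    (U D : Finset (Fin n × Fin n)) (hU : U ⊆ M) (hD : D ⊆ M) (hUD : Disjoint U D)
    (hUk : k ≤ U.card) (hDk : k ≤ D.card)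
    (hexit : ∀ m ∈ D, ∃ v : Fin n, (v = m.1 ∨ v = m.2) ∧
      ∀ m' ∈ U, ¬ G.Adj v m'.1 ∧ ¬ G.Adj v m'.2) : False := by
  obtain ⟨D', hD'sub, hD'card⟩ := Finset.exists_subset_card_eq hDk
  obtain ⟨U', hU'sub, hU'card⟩ := Finset.exists_subset_card_eq hUk
  have hexit' : ∀ m : Fin n × Fin n, ∃ v : Fin n, m ∈ D →
      ((v = m.1 ∨ v = m.2) ∧ ∀ m' ∈ U, ¬ G.Adj v m'.1 ∧ ¬ G.Adj v m'.2) := by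
    intro m
    by_cases h : m ∈ D
    · obtain ⟨v, hv⟩ := hexit m h
      exact ⟨v, fun _ => hv⟩
    · exact ⟨m.1, fun h' => absurd h' h⟩
  choose f hf using hexit'
  have hSinj : Set.InjOn f D' := by
    intro a ha b hb hab
    have haD := hD'sub ha; have hbD := hD'sub hb
    exact share a (hD haD) b (hD hbD) (f a) (hf a haD).1 (hab ▸ (hf b hbD).1)
  have hTinj : Set.InjOn (Prod.fst : Fin n × Fin n → Fin n) ↑U' := by
    intro a ha b hb hab
    exact share a (hU (hU'sub ha)) b (hU (hU'sub hb)) a.1 (Or.inl rfl) (Or.inl hab)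
  have hdisj : Disjoint (D'.image f) (U'.image Prod.fst) := by
    rw [Finset.disjoint_left]
    rintro a haS haT
    obtain ⟨m, hm, rfl⟩ := Finset.mem_image.mp haS
    obtain ⟨m', hm', he⟩ := Finset.mem_image.mp haT
    have heq : m = m' := share m (hD (hD'sub hm)) m' (hU (hU'sub hm')) (f m)
      (hf m (hD'sub hm)).1 (Or.inl he.symm)
    have : m' ∈ D := by rw [← heq]; exact hD'sub hm
    exact Finset.disjoint_left.mp hUD (hU'sub hm') this
  obtain ⟨s, hs, t, ht, hadj⟩ := hG (D'.image f) (U'.image Prod.fst) hdisj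
    (by rw [Finset.card_image_of_injOn hSinj, hD'card])
    (by rw [Finset.card_image_of_injOn hTinj, hU'card])
  obtain ⟨m, hm, rfl⟩ := Finset.mem_image.mp hs
  obtain ⟨m', hm', rfl⟩ := Finset.mem_image.mp ht
  exact ((hf m (hD'sub hm)).2 m' (hU'sub hm')).1 hadj

lemma aux_out (r : List (Fin n × Fin n))
    (hmem : ∀ p ∈ r, p ∈ M ∨ p.swap ∈ M)
    (hpw : r.Pairwise fun p q => p ≠ q ∧ p ≠ q.swap ∧ p.swap ≠ q)
    (hch : r.Chain' fun p q => G.Adj q.2 p.1)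
    (hlen : M.card ≤ r.length + (2 * k - 1)) :
    ∃ l : List (Fin n × Fin n),
      (∀ p ∈ l, p ∈ M ∨ p.swap ∈ M) ∧
      l.Pairwise (fun p q => p ≠ q ∧ p ≠ q.swap ∧ p.swap ≠ q) ∧
      l.Chain' (fun p q => G.Adj p.2 q.1) ∧
      M.card ≤ l.length + (2 * k - 1) := by
  refine ⟨r.reverse, ?_, ?_, ?_, by simpa using hlen⟩
  · intro p hp; exact hmem p (List.mem_reverse.mp hp)
  · rw [List.pairwise_reverse]
    exact hpw.imp fun {a b} h => ⟨h.1.symm, h.2.2.symm, h.2.1.symm⟩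
  · exact List.isChain_reverse.mpr hch

lemma aux_main
    (hG : ∀ S T : Finset (Fin n), Disjoint S T → S.card = k → T.card = k →
      ∃ s ∈ S, ∃ t ∈ T, G.Adj s t)
    (share : ∀ p ∈ M, ∀ q ∈ M, ∀ v : Fin n,
      (v = p.1 ∨ v = p.2) → (v = q.1 ∨ v = q.2) → p = q)
    (hk : 1 ≤ k) :
    ∀ N : ℕ, ∀ (U D : Finset (Fin n × Fin n)) (r : List (Fin n × Fin n)),
      2 * U.card + r.length ≤ N →
      U ⊆ M → D ⊆ M → Disjoint U D →
      (∀ p ∈ r, (p ∈ M ∨ p.swap ∈ M) ∧ p ∉ U ∧ p.swap ∉ U ∧ p ∉ D ∧ p.swap ∉ D) →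
      r.Pairwise (fun p q => p ≠ q ∧ p ≠ q.swap ∧ p.swap ≠ q) →
      r.Chain' (fun p q => G.Adj q.2 p.1) →
      M.card = U.card + D.card + r.length →
      (∀ m ∈ D, ∃ v : Fin n, (v = m.1 ∨ v = m.2) ∧
        ∀ m' ∈ U, ¬ G.Adj v m'.1 ∧ ¬ G.Adj v m'.2) →
      D.card < k →
      ∃ l : List (Fin n × Fin n),
        (∀ p ∈ l, p ∈ M ∨ p.swap ∈ M) ∧
        l.Pairwise (fun p q => p ≠ q ∧ p ≠ q.swap ∧ p.swap ≠ q) ∧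
        l.Chain' (fun p q => G.Adj p.2 q.1) ∧
        M.card ≤ l.length + (2 * k - 1) := by
  have swapM : ∀ m ∈ M, m.swap ∈ M → m.swap = m := fun m hm hsm =>
    share m.swap hsm m hm m.1 (Or.inr rfl) (Or.inl rfl)
  intro N
  induction N with
  | zero =>
    intro U D r hN hU hD hUD hmem hpw hch hcard hexit hDk
    exact aux_out r (fun p hp => (hmem p hp).1) hpw hch (by omega)
  | succ N ih =>
    intro U D r hN hU hD hUD hmem hpw hch hcard hexit hDk
    -- helper facts for pushing an unused pair m onto the stack
    have key : ∀ m ∈ U, ∀ p : Fin n × Fin n, p = m ∨ p = m.swap →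
        (p ∈ M ∨ p.swap ∈ M) ∧ p ∉ U.erase m ∧ p.swap ∉ U.erase m ∧ p ∉ D ∧ p.swap ∉ D := by
      intro m hmU p hp
      have hmM := hU hmU
      have h1 : m ∉ U.erase m := Finset.notMem_erase m U
      have h2 : m.swap ∉ U.erase m := fun h => by
        have he : m.swap = m := swapM m hmM (hU ((Finset.erase_subset _ _) h))
        rw [he] at h; exact h1 h
      have h3 : m ∉ D := Finset.disjoint_left.mp hUD hmU
      have h4 : m.swap ∉ D := fun h => by
        have he : m.swap = m := swapM m hmM (hD h)
        rw [he] at h; exact h3 h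
      rcases hp with rfl | rfl
      · exact ⟨Or.inl hmM, h1, h2, h3, h4⟩
      · refine ⟨Or.inr (by rw [Prod.swap_swap]; exact hmM), h2, ?_, h4, ?_⟩ <;>
          rw [Prod.swap_swap] <;> assumption
    have relkey : ∀ m ∈ U, ∀ p : Fin n × Fin n, p = m ∨ p = m.swap → ∀ q ∈ r,
        p ≠ q ∧ p ≠ q.swap ∧ p.swap ≠ q := by
      intro m hmU p hp q hq
      obtain ⟨-, hq1, hq2, -, -⟩ := hmem q hq
      have e1 : q ≠ m := fun h => hq1 (h ▸ hmU)
      have e2 : q ≠ m.swap := fun h => hq2 (by rw [h, Prod.swap_swap]; exact hmU)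
      have e3 : q.swap ≠ m := fun h => hq2 (by rw [h]; exact hmU)
      have e4 : q.swap ≠ m.swap := fun h => e1 (by
        have := congrArg Prod.swap h
        simpa using this)
      rcases hp with rfl | rfl
      · exact ⟨e1.symm, e3.symm, e2.symm⟩
      · exact ⟨e2.symm, e4.symm, by rw [Prod.swap_swap]; exact e1.symm⟩
    rcases U.eq_empty_or_nonempty with rfl | hUne
    · exact aux_out r (fun p hp => (hmem p hp).1) hpw hch (by simp at hcard; omega)
    rcases r with _ | ⟨t, r₀⟩
    · -- empty stack: push any unused pair
      obtain ⟨m, hmU⟩ := hUne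
      have hU1 : 1 ≤ U.card := Finset.card_pos.mpr ⟨m, hmU⟩
      refine ih (U.erase m) D [m] ?_ ((Finset.erase_subset _ _).trans hU) hD
        (Finset.disjoint_of_subset_left (Finset.erase_subset _ _) hUD) ?_
        (List.pairwise_singleton _ _) (List.isChain_singleton _) ?_ ?_ hDk
      · rw [Finset.card_erase_of_mem hmU]; simp at hN ⊢; omega
      · intro p hp
        rw [List.mem_singleton] at hp
        exact key m hmU p (Or.inl hp)
      · rw [Finset.card_erase_of_mem hmU]; simp at hcard ⊢; omega
      · intro m' hm'
        obtain ⟨v, hv1, hv2⟩ := hexit m' hm'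
        exact ⟨v, hv1, fun q hq => hv2 q ((Finset.erase_subset _ _) hq)⟩
    by_cases hext : ∃ m' ∈ U, G.Adj t.2 m'.1 ∨ G.Adj t.2 m'.2
    · -- extend the path
      obtain ⟨m', hm'U, hadj⟩ := hext
      obtain ⟨p, hp, hpadj⟩ : ∃ p : Fin n × Fin n, (p = m' ∨ p = m'.swap) ∧ G.Adj t.2 p.1 := by
        rcases hadj with h | h
        · exact ⟨m', Or.inl rfl, h⟩
        · exact ⟨m'.swap, Or.inr rfl, h⟩
      have hU1 : 1 ≤ U.card := Finset.card_pos.mpr ⟨m', hm'U⟩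
      refine ih (U.erase m') D (p :: t :: r₀) ?_ ((Finset.erase_subset _ _).trans hU) hD
        (Finset.disjoint_of_subset_left (Finset.erase_subset _ _) hUD) ?_
        (List.pairwise_cons.mpr ⟨relkey m' hm'U p hp, hpw⟩)
        (List.IsChain.cons_cons hpadj hch) ?_ ?_ hDk
      · rw [Finset.card_erase_of_mem hm'U]; simp at hN ⊢; omega
      · intro q hq
        rcases List.mem_cons.mp hq with rfl | hq'
        · exact key m' hm'U q hp
        · obtain ⟨o1, o2, o3, o4, o5⟩ := hmem q hq'
          exact ⟨o1, fun h => o2 ((Finset.erase_subset _ _) h),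
            fun h => o3 ((Finset.erase_subset _ _) h), o4, o5⟩
      · rw [Finset.card_erase_of_mem hm'U]; simp at hcard ⊢; omega
      · intro m'' hm''
        obtain ⟨v, hv1, hv2⟩ := hexit m'' hm''
        exact ⟨v, hv1, fun q hq => hv2 q ((Finset.erase_subset _ _) hq)⟩
    · -- cannot extend: pop the top of the stack
      push_neg at hext
      obtain ⟨o1, htU, htsU, htD, htsD⟩ := hmem t List.mem_cons_self
      obtain ⟨mt, hmtM, hmt⟩ : ∃ mt, mt ∈ M ∧ (t = mt ∨ t = mt.swap) := by
        rcases o1 with h | h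
        · exact ⟨t, h, Or.inl rfl⟩
        · exact ⟨t.swap, h, Or.inr (Prod.swap_swap t).symm⟩
      have hmts : t = mt ∨ mt = t.swap := by
        rcases hmt with h | h
        · exact Or.inl h
        · exact Or.inr (by rw [h, Prod.swap_swap])
      have hmtD : mt ∉ D := by
        rcases hmts with h | h
        · rwa [← h]
        · rwa [h]
      have hmtU : mt ∉ U := by
        rcases hmts with h | h
        · rwa [← h]
        · rwa [h]
      have hvt : t.2 = mt.1 ∨ t.2 = mt.2 := by
        rcases hmt with h | h
        · exact Or.inr (by rw [h])
        · exact Or.inl (by rw [h, Prod.snd_swap])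
      have hexit' : ∀ m'' ∈ insert mt D, ∃ v : Fin n, (v = m''.1 ∨ v = m''.2) ∧
          ∀ m' ∈ U, ¬ G.Adj v m'.1 ∧ ¬ G.Adj v m'.2 := by
        intro m'' hm''
        rcases Finset.mem_insert.mp hm'' with rfl | h
        · exact ⟨t.2, hvt, fun q hq => hext q hq⟩
        · exact hexit m'' h
      have hpwc := List.pairwise_cons.mp hpw
      have hDins : (insert mt D).card = D.card + 1 := Finset.card_insert_of_notMem hmtD
      by_cases hfull : k ≤ D.card + 1
      · -- black count reached k: stop, output current stack
        have hUk : U.card < k := by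
          by_contra hUk
          push_neg at hUk
          exact aux_no_big hG share U (insert mt D) hU
            (Finset.insert_subset hmtM hD)
            (Finset.disjoint_insert_right.mpr ⟨hmtU, hUD⟩)
            hUk (by omega) hexit'
        refine aux_out (t :: r₀) (fun p hp => (hmem p hp).1) hpw hch ?_
        simp only [List.length_cons] at hcard ⊢
        omega
      · -- pop and continue
        have hq_mt : ∀ q ∈ r₀, q ≠ mt ∧ q.swap ≠ mt := by
          intro q hq
          obtain ⟨e1, e2, e3⟩ := hpwc.1 q hq
          rcases hmts with h | h
          · rw [← h]
            exact ⟨fun hh => e1 hh.symm, fun hh => e2 hh.symm⟩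
          · rw [h]
            refine ⟨fun hh => e3 hh.symm, fun hh => e1 ?_⟩
            have := congrArg Prod.swap hh
            simpa using this.symm
        refine ih U (insert mt D) r₀ ?_ hU (Finset.insert_subset hmtM hD)
          (Finset.disjoint_insert_right.mpr ⟨hmtU, hUD⟩) ?_ hpwc.2 hch.tail ?_ hexit' ?_
        · simp at hN ⊢; omega
        · intro q hq
          obtain ⟨o1, o2, o3, o4, o5⟩ := hmem q (List.mem_cons_of_mem _ hq)
          obtain ⟨e1, e2⟩ := hq_mt q hq
          refine ⟨o1, o2, o3, fun h => ?_, fun h => ?_⟩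
          · rcases Finset.mem_insert.mp h with h | h
            exacts [e1 h, o4 h]
          · rcases Finset.mem_insert.mp h with h | h
            exacts [e2 h, o5 h]
        · rw [hDins]; simp at hcard ⊢; omega
        · omega

end Aux

theorem alternating_path_covering_most_pairs (n k : ℕ) (G : SimpleGraph (Fin n))
    (hG : ∀ S T : Finset (Fin n), Disjoint S T → S.card = k → T.card = k →
      ∃ s ∈ S, ∃ t ∈ T, G.Adj s t)
    (M : Finset (Fin n × Fin n))
    (hM : ∀ p ∈ M, ∀ q ∈ M, p ≠ q →
      ∀ v : Fin n, (v = p.1 ∨ v = p.2) → ¬(v = q.1 ∨ v = q.2)) :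
    ∃ l : List (Fin n × Fin n),
      (∀ p ∈ l, p ∈ M ∨ p.swap ∈ M) ∧
      l.Pairwise (fun p q => p ≠ q ∧ p ≠ q.swap ∧ p.swap ≠ q) ∧
      l.Chain' (fun p q => G.Adj p.2 q.1) ∧
      M.card ≤ l.length + (2 * k - 1) := by
  rcases Nat.eq_zero_or_pos k with rfl | hk
  · obtain ⟨s, hs, -⟩ := hG ∅ ∅ (by simp) (by simp) (by simp)
    exact absurd hs (Finset.notMem_empty s)
  · have share : ∀ p ∈ M, ∀ q ∈ M, ∀ v : Fin n,
        (v = p.1 ∨ v = p.2) → (v = q.1 ∨ v = q.2) → p = q := by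
      intro p hp q hq v h1 h2
      by_contra hne
      exact hM p hp q hq hne v h1 h2
    exact aux_main hG share hk (2 * M.card) M ∅ [] (by simp) Finset.Subset.rfl
      (Finset.empty_subset _) (Finset.disjoint_empty_right _) (by simp) (by simp)
      List.isChain_nil (by simp) (by simp) (by simpa using hk)
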